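/- For the 9-dimensional quiver algebra A with relations δ² = γ³ = αβ, δγ = γδ = 0, δα = γα = 0, βδ = βγ = 0, the center Z(A) has k-basis {1, γ, γ², δ, δ², βα}; in particular dim_k Z(A) = 6. -/

import Mathlib

/-! The 9-dimensional algebra `A` given by the quiver with vertices `i, j`, arrows
`α : i → j`, `β : j → i`, and loops `γ, δ` at `i`, with relations
`δ² = γ³ = αβ`, `δγ = γδ = 0`, `δα = γα = 0`, `βδ = βγ = 0`.
Paths compose left-to-right, so the product `x * y` means "first `x`, then `y`";
in particular `α * β` is a loop at `i` and `β * α` is a loop at `j`.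
We realise `A` as the quotient of the free algebra on the six generators
`e_i, e_j, α, β, γ, δ` by the path-algebra relations together with the quiver relations. -/

open FreeAlgebra

/-- The defining relations of the quiver algebra: generator `0` is the vertex idempotent
`e_i`, `1` is `e_j`, `2` is `α : i → j`, `3` is `β : j → i`, `4` is the loop `γ` at `i`,
and `5` is the loop `δ` at `i`. -/
inductive QuiverRel (k : Type*) [Field k] :
    FreeAlgebra k (Fin 6) → FreeAlgebra k (Fin 6) → Prop
  | idem_i : QuiverRel k (ι k 0 * ι k 0) (ι k 0)
  | idem_j : QuiverRel k (ι k 1 * ι k 1) (ι k 1)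
  | orth_ij : QuiverRel k (ι k 0 * ι k 1) 0
  | orth_ji : QuiverRel k (ι k 1 * ι k 0) 0
  | sum_idem : QuiverRel k (ι k 0 + ι k 1) 1
  | alpha_src : QuiverRel k (ι k 0 * ι k 2) (ι k 2)   -- α starts at i
  | alpha_tgt : QuiverRel k (ι k 2 * ι k 1) (ι k 2)   -- α ends at j
  | beta_src : QuiverRel k (ι k 1 * ι k 3) (ι k 3)    -- β starts at j
  | beta_tgt : QuiverRel k (ι k 3 * ι k 0) (ι k 3)    -- β ends at i
  | gamma_src : QuiverRel k (ι k 0 * ι k 4) (ι k 4)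
  | gamma_tgt : QuiverRel k (ι k 4 * ι k 0) (ι k 4)
  | delta_src : QuiverRel k (ι k 0 * ι k 5) (ι k 5)
  | delta_tgt : QuiverRel k (ι k 5 * ι k 0) (ι k 5)
  | delta_sq : QuiverRel k (ι k 5 * ι k 5) (ι k 2 * ι k 3)        -- δ² = αβ
  | gamma_cube : QuiverRel k (ι k 4 * (ι k 4 * ι k 4)) (ι k 2 * ι k 3)  -- γ³ = αβ
  | delta_gamma : QuiverRel k (ι k 5 * ι k 4) 0
  | gamma_delta : QuiverRel k (ι k 4 * ι k 5) 0
  | delta_alpha : QuiverRel k (ι k 5 * ι k 2) 0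
  | gamma_alpha : QuiverRel k (ι k 4 * ι k 2) 0
  | beta_delta : QuiverRel k (ι k 3 * ι k 5) 0
  | beta_gamma : QuiverRel k (ι k 3 * ι k 4) 0

variable (k : Type*) [Field k]

/-- The 9-dimensional quiver algebra `A`. -/
abbrev QuiverAlg := RingQuot (QuiverRel k)

/-- The vertex idempotent `i`. -/
noncomputable def qi : QuiverAlg k := RingQuot.mkAlgHom k (QuiverRel k) (ι k 0)
/-- The vertex idempotent `j`. -/
noncomputable def qj : QuiverAlg k := RingQuot.mkAlgHom k (QuiverRel k) (ι k 1)
/-- The arrow `α : i → j`. -/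
noncomputable def qα : QuiverAlg k := RingQuot.mkAlgHom k (QuiverRel k) (ι k 2)
/-- The arrow `β : j → i`. -/
noncomputable def qβ : QuiverAlg k := RingQuot.mkAlgHom k (QuiverRel k) (ι k 3)
/-- The loop `γ` at `i`. -/
noncomputable def qγ : QuiverAlg k := RingQuot.mkAlgHom k (QuiverRel k) (ι k 4)
/-- The loop `δ` at `i`. -/
noncomputable def qδ : QuiverAlg k := RingQuot.mkAlgHom k (QuiverRel k) (ι k 5)

/-- The standard basis vector `{i, j, α, β, βα, γ, γ², δ, δ²}` of `A`. -/
noncomputable def qbasisVec : Fin 9 → QuiverAlg k :=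
  ![qi k, qj k, qα k, qβ k, qβ k * qα k, qγ k, qγ k ^ 2, qδ k, qδ k ^ 2]

/-! ### Auxiliary development -/

section Aux

open RingQuot

local notation "A" => QuiverAlg k

/-- Relations hold in the quotient. -/
lemma qRel {a b : FreeAlgebra k (Fin 6)} (h : QuiverRel k a b) :
    mkAlgHom k (QuiverRel k) a = mkAlgHom k (QuiverRel k) b :=
  RingQuot.mkAlgHom_rel k h

/- Base relations in `A`. -/
lemma q_ii : qi k * qi k = qi k := by
  rw [qi, ← map_mul]; exact qRel k .idem_i
lemma q_jj : qj k * qj k = qj k := by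
  rw [qj, ← map_mul]; exact qRel k .idem_j
lemma q_ij : qi k * qj k = 0 := by
  rw [qi, qj, ← map_mul, qRel k .orth_ij, map_zero]
lemma q_ji : qj k * qi k = 0 := by
  rw [qi, qj, ← map_mul, qRel k .orth_ji, map_zero]
lemma q_one : qi k + qj k = 1 := by
  rw [qi, qj, ← map_add, qRel k .sum_idem, map_one]
lemma q_ia : qi k * qα k = qα k := by
  rw [qi, qα, ← map_mul]; exact qRel k .alpha_src
lemma q_aj : qα k * qj k = qα k := by
  rw [qj, qα, ← map_mul]; exact qRel k .alpha_tgt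
lemma q_jb : qj k * qβ k = qβ k := by
  rw [qj, qβ, ← map_mul]; exact qRel k .beta_src
lemma q_bi : qβ k * qi k = qβ k := by
  rw [qi, qβ, ← map_mul]; exact qRel k .beta_tgt
lemma q_ig : qi k * qγ k = qγ k := by
  rw [qi, qγ, ← map_mul]; exact qRel k .gamma_src
lemma q_gi : qγ k * qi k = qγ k := by
  rw [qi, qγ, ← map_mul]; exact qRel k .gamma_tgt
lemma q_id : qi k * qδ k = qδ k := by
  rw [qi, qδ, ← map_mul]; exact qRel k .delta_src
lemma q_di : qδ k * qi k = qδ k := by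
  rw [qi, qδ, ← map_mul]; exact qRel k .delta_tgt
lemma q_dd : qδ k * qδ k = qα k * qβ k := by
  rw [qδ, qα, qβ, ← map_mul, ← map_mul]; exact qRel k .delta_sq
lemma q_ggg : qγ k * (qγ k * qγ k) = qα k * qβ k := by
  rw [qγ, qα, qβ, ← map_mul, ← map_mul, ← map_mul]; exact qRel k .gamma_cube
lemma q_dg : qδ k * qγ k = 0 := by
  rw [qδ, qγ, ← map_mul, qRel k .delta_gamma, map_zero]
lemma q_gd : qγ k * qδ k = 0 := by
  rw [qδ, qγ, ← map_mul, qRel k .gamma_delta, map_zero]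
lemma q_da : qδ k * qα k = 0 := by
  rw [qδ, qα, ← map_mul, qRel k .delta_alpha, map_zero]
lemma q_ga : qγ k * qα k = 0 := by
  rw [qγ, qα, ← map_mul, qRel k .gamma_alpha, map_zero]
lemma q_bd : qβ k * qδ k = 0 := by
  rw [qβ, qδ, ← map_mul, qRel k .beta_delta, map_zero]
lemma q_bg : qβ k * qγ k = 0 := by
  rw [qβ, qγ, ← map_mul, qRel k .beta_gamma, map_zero]

variable {k}

/- Complement lemmas. -/
lemma compl_r {x : A} (hx : x * qj k = x) : x * qi k = 0 := by
  have h : x * (qi k + qj k) = x := by rw [q_one, mul_one]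
  rw [mul_add, hx] at h; exact add_right_cancel (h.trans (zero_add x).symm)
lemma compl_r' {x : A} (hx : x * qi k = x) : x * qj k = 0 := by
  have h : x * (qi k + qj k) = x := by rw [q_one, mul_one]
  rw [mul_add, hx] at h; exact add_left_cancel (h.trans (add_zero x).symm)
lemma compl_l {x : A} (hx : qj k * x = x) : qi k * x = 0 := by
  have h : (qi k + qj k) * x = x := by rw [q_one, one_mul]
  rw [add_mul, hx] at h; exact add_right_cancel (h.trans (zero_add x).symm)
lemma compl_l' {x : A} (hx : qi k * x = x) : qj k * x = 0 := by
  have h : (qi k + qj k) * x = x := by rw [q_one, one_mul]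
  rw [add_mul, hx] at h; exact add_left_cancel (h.trans (add_zero x).symm)

lemma mism {x y e : A} (h1 : x * e = 0) (h2 : e * y = y) : x * y = 0 := by
  rw [← h2, ← mul_assoc, h1, zero_mul]

variable (k)

/- Derived complement relations. -/
lemma q_ai : qα k * qi k = 0 := compl_r (q_aj k)
lemma q_ib : qi k * qβ k = 0 := compl_l (q_jb k)
lemma q_ja : qj k * qα k = 0 := compl_l' (q_ia k)
lemma q_bj : qβ k * qj k = 0 := compl_r' (q_bi k)
lemma q_jg : qj k * qγ k = 0 := compl_l' (q_ig k)
lemma q_gj : qγ k * qj k = 0 := compl_r' (q_gi k)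
lemma q_jd : qj k * qδ k = 0 := compl_l' (q_id k)
lemma q_dj : qδ k * qj k = 0 := compl_r' (q_di k)

lemma q_ab : qα k * qβ k = qδ k ^ 2 := by rw [sq]; exact (q_dd k).symm

/- Row i. -/
lemma q_iba : qi k * (qβ k * qα k) = 0 := by rw [← mul_assoc, q_ib, zero_mul]
lemma q_ig2 : qi k * qγ k ^ 2 = qγ k ^ 2 := by rw [sq, ← mul_assoc, q_ig]
lemma q_id2 : qi k * qδ k ^ 2 = qδ k ^ 2 := by rw [sq, ← mul_assoc, q_id]
/- Row j. -/
lemma q_jba : qj k * (qβ k * qα k) = qβ k * qα k := by rw [← mul_assoc, q_jb]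
lemma q_jg2 : qj k * qγ k ^ 2 = 0 := by rw [sq, ← mul_assoc, q_jg, zero_mul]
lemma q_jd2 : qj k * qδ k ^ 2 = 0 := by rw [sq, ← mul_assoc, q_jd, zero_mul]
/- Row α. -/
lemma q_aa : qα k * qα k = 0 := mism (q_ai k) (q_ia k)
lemma q_d2a : qδ k ^ 2 * qα k = 0 := by rw [sq, mul_assoc, q_da, mul_zero]
lemma q_aba : qα k * (qβ k * qα k) = 0 := by rw [← mul_assoc, q_ab, q_d2a]
lemma q_ag : qα k * qγ k = 0 := mism (q_ai k) (q_ig k)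
lemma q_ag2 : qα k * qγ k ^ 2 = 0 := mism (q_ai k) (q_ig2 k)
lemma q_ad : qα k * qδ k = 0 := mism (q_ai k) (q_id k)
lemma q_ad2 : qα k * qδ k ^ 2 = 0 := mism (q_ai k) (q_id2 k)
/- Row β. -/
lemma q_bb : qβ k * qβ k = 0 := mism (q_bj k) (q_jb k)
lemma q_bba : qβ k * (qβ k * qα k) = 0 := by rw [← mul_assoc, q_bb, zero_mul]
lemma q_bg2 : qβ k * qγ k ^ 2 = 0 := by rw [sq, ← mul_assoc, q_bg, zero_mul]
lemma q_bd2 : qβ k * qδ k ^ 2 = 0 := by rw [sq, ← mul_assoc, q_bd, zero_mul]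
/- Row βα. -/
lemma q_bai : (qβ k * qα k) * qi k = 0 := by rw [mul_assoc, q_ai, mul_zero]
lemma q_baj : (qβ k * qα k) * qj k = qβ k * qα k := by rw [mul_assoc, q_aj]
lemma q_baa : (qβ k * qα k) * qα k = 0 := by rw [mul_assoc, q_aa, mul_zero]
lemma q_bab : (qβ k * qα k) * qβ k = 0 := by rw [mul_assoc, q_ab, q_bd2]
lemma q_baba : (qβ k * qα k) * (qβ k * qα k) = 0 := by
  rw [← mul_assoc, q_bab, zero_mul]
lemma q_bag : (qβ k * qα k) * qγ k = 0 := by rw [mul_assoc, q_ag, mul_zero]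
lemma q_bag2 : (qβ k * qα k) * qγ k ^ 2 = 0 := by rw [mul_assoc, q_ag2, mul_zero]
lemma q_bad : (qβ k * qα k) * qδ k = 0 := by rw [mul_assoc, q_ad, mul_zero]
lemma q_bad2 : (qβ k * qα k) * qδ k ^ 2 = 0 := by rw [mul_assoc, q_ad2, mul_zero]
/- Row γ. -/
lemma q_gb : qγ k * qβ k = 0 := mism (q_gj k) (q_jb k)
lemma q_gba : qγ k * (qβ k * qα k) = 0 := by rw [← mul_assoc, q_gb, zero_mul]
lemma q_gg : qγ k * qγ k = qγ k ^ 2 := (sq _).symm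
lemma q_gg2 : qγ k * qγ k ^ 2 = qδ k ^ 2 := by rw [sq, q_ggg, q_ab]
lemma q_gd2 : qγ k * qδ k ^ 2 = 0 := by rw [sq, ← mul_assoc, q_gd, zero_mul]
/- Row γ². -/
lemma q_g2i : qγ k ^ 2 * qi k = qγ k ^ 2 := by rw [sq, mul_assoc, q_gi]
lemma q_g2j : qγ k ^ 2 * qj k = 0 := by rw [sq, mul_assoc, q_gj, mul_zero]
lemma q_g2a : qγ k ^ 2 * qα k = 0 := by rw [sq, mul_assoc, q_ga, mul_zero]
lemma q_g2b : qγ k ^ 2 * qβ k = 0 := by rw [sq, mul_assoc, q_gb, mul_zero]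
lemma q_g2ba : qγ k ^ 2 * (qβ k * qα k) = 0 := by rw [← mul_assoc, q_g2b, zero_mul]
lemma q_g2g : qγ k ^ 2 * qγ k = qδ k ^ 2 := by rw [sq, mul_assoc, q_ggg, q_ab]
lemma q_d2g : qδ k ^ 2 * qγ k = 0 := by rw [sq, mul_assoc, q_dg, mul_zero]
lemma q_g2g2 : qγ k ^ 2 * qγ k ^ 2 = 0 := by
  nth_rewrite 2 [sq]
  rw [← mul_assoc, q_g2g, q_d2g]
lemma q_g2d : qγ k ^ 2 * qδ k = 0 := by rw [sq, mul_assoc, q_gd, mul_zero]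
lemma q_g2d2 : qγ k ^ 2 * qδ k ^ 2 = 0 := by rw [sq, mul_assoc, q_gd2, mul_zero]
/- Row δ. -/
lemma q_db : qδ k * qβ k = 0 := mism (q_dj k) (q_jb k)
lemma q_dba : qδ k * (qβ k * qα k) = 0 := by rw [← mul_assoc, q_db, zero_mul]
lemma q_dg2 : qδ k * qγ k ^ 2 = 0 := by rw [sq, ← mul_assoc, q_dg, zero_mul]
lemma q_dd' : qδ k * qδ k = qδ k ^ 2 := (sq _).symm
lemma q_dd2 : qδ k * qδ k ^ 2 = 0 := by
  rw [sq, q_dd, ← mul_assoc, q_da, zero_mul]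
/- Row δ². -/
lemma q_d2i : qδ k ^ 2 * qi k = qδ k ^ 2 := by rw [sq, mul_assoc, q_di]
lemma q_d2j : qδ k ^ 2 * qj k = 0 := by rw [sq, mul_assoc, q_dj, mul_zero]
lemma q_d2b : qδ k ^ 2 * qβ k = 0 := by rw [sq, mul_assoc, q_db, mul_zero]
lemma q_d2ba : qδ k ^ 2 * (qβ k * qα k) = 0 := by rw [← mul_assoc, q_d2b, zero_mul]
lemma q_d2g2 : qδ k ^ 2 * qγ k ^ 2 = 0 := by rw [sq, mul_assoc, q_dg2, mul_zero]
lemma q_d2d : qδ k ^ 2 * qδ k = 0 := by rw [sq, mul_assoc, ← sq, q_dd2]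
lemma q_d2d2 : qδ k ^ 2 * qδ k ^ 2 = 0 := by
  nth_rewrite 1 [sq]
  rw [mul_assoc, q_dd2, mul_zero]


attribute [simp] q_ii q_jj q_ij q_ji q_ia q_aj q_jb q_bi q_ig q_gi q_id q_di
  q_dg q_gd q_da q_ga q_bd q_bg q_ai q_ib q_ja q_bj q_jg q_gj q_jd q_dj q_ab
  q_iba q_ig2 q_id2 q_jba q_jg2 q_jd2 q_aa q_d2a q_aba q_ag q_ag2 q_ad q_ad2
  q_bb q_bba q_bg2 q_bd2 q_bai q_baj q_baa q_bab q_baba q_bag q_bag2 q_bad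
  q_bad2 q_gb q_gba q_gg q_gg2 q_gd2 q_g2i q_g2j q_g2a q_g2b q_g2ba q_g2g
  q_d2g q_g2g2 q_g2d q_g2d2 q_db q_dba q_dg2 q_dd' q_dd2 q_d2i q_d2j q_d2b
  q_d2ba q_d2g2 q_d2d q_d2d2


@[simp] lemma qb0 : qbasisVec k 0 = qi k := rfl
@[simp] lemma qb1 : qbasisVec k 1 = qj k := rfl
@[simp] lemma qb2 : qbasisVec k 2 = qα k := rfl
@[simp] lemma qb3 : qbasisVec k 3 = qβ k := rfl
@[simp] lemma qb4 : qbasisVec k 4 = qβ k * qα k := rfl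
@[simp] lemma qb5 : qbasisVec k 5 = qγ k := rfl
@[simp] lemma qb6 : qbasisVec k 6 = qγ k ^ 2 := rfl
@[simp] lemma qb7 : qbasisVec k 7 = qδ k := rfl
@[simp] lemma qb8 : qbasisVec k 8 = qδ k ^ 2 := rfl

/-- The matrices of left multiplication by the six generators on the basis
`i, j, α, β, βα, γ, γ², δ, δ²`, over `ℕ`. -/
def Nmat : Fin 6 → Matrix (Fin 9) (Fin 9) ℕ
  | 0 => Matrix.of fun x j =>
      if x = j ∧ (x = 0 ∨ x = 2 ∨ x = 5 ∨ x = 6 ∨ x = 7 ∨ x = 8) then 1 else 0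
  | 1 => Matrix.of fun x j => if x = j ∧ (x = 1 ∨ x = 3 ∨ x = 4) then 1 else 0
  | 2 => Matrix.of fun x j => if (x = 2 ∧ j = 1) ∨ (x = 8 ∧ j = 3) then 1 else 0
  | 3 => Matrix.of fun x j => if (x = 3 ∧ j = 0) ∨ (x = 4 ∧ j = 2) then 1 else 0
  | 4 => Matrix.of fun x j =>
      if (x = 5 ∧ j = 0) ∨ (x = 6 ∧ j = 5) ∨ (x = 8 ∧ j = 6) then 1 else 0
  | 5 => Matrix.of fun x j => if (x = 7 ∧ j = 0) ∨ (x = 8 ∧ j = 7) then 1 else 0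

/-- Casting `ℕ`-matrices into `k`-matrices. -/
noncomputable def mapc : Matrix (Fin 9) (Fin 9) ℕ →+* Matrix (Fin 9) (Fin 9) k :=
  (Nat.castRingHom k).mapMatrix

/-- The representation of the free algebra. -/
noncomputable def ρ₀ : FreeAlgebra k (Fin 6) →ₐ[k] Matrix (Fin 9) (Fin 9) k :=
  FreeAlgebra.lift k fun g => mapc k (Nmat g)

theorem rho_rel : ∀ {a b : FreeAlgebra k (Fin 6)},
    QuiverRel k a b → ρ₀ k a = ρ₀ k b := by
  intro a b h
  cases h <;>
    simp only [ρ₀, map_mul, map_add, map_one, map_zero, lift_ι_apply] <;>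
    simp only [← map_mul (mapc k), ← map_add (mapc k), ← map_one (mapc k),
      ← map_zero (mapc k)] <;>
    exact congrArg _ (by decide)

/-- The representation of `A`. -/
noncomputable def ρ : QuiverAlg k →ₐ[k] Matrix (Fin 9) (Fin 9) k :=
  RingQuot.liftAlgHom k ⟨ρ₀ k, fun {_ _} h => rho_rel k h⟩

lemma ρ_mk (x : FreeAlgebra k (Fin 6)) :
    ρ k (mkAlgHom k (QuiverRel k) x) = ρ₀ k x :=
  RingQuot.liftAlgHom_mkAlgHom_apply k _ _ _

/-- The matrices representing the nine basis elements. -/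
def Wmat : Fin 9 → Matrix (Fin 9) (Fin 9) ℕ :=
  ![Nmat 0, Nmat 1, Nmat 2, Nmat 3, Nmat 3 * Nmat 2, Nmat 4, Nmat 4 * Nmat 4,
    Nmat 5, Nmat 5 * Nmat 5]

@[simp] lemma W0 : Wmat 0 = Nmat 0 := rfl
@[simp] lemma W1 : Wmat 1 = Nmat 1 := rfl
@[simp] lemma W2 : Wmat 2 = Nmat 2 := rfl
@[simp] lemma W3 : Wmat 3 = Nmat 3 := rfl
@[simp] lemma W4 : Wmat 4 = Nmat 3 * Nmat 2 := rfl
@[simp] lemma W5 : Wmat 5 = Nmat 4 := rfl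
@[simp] lemma W6 : Wmat 6 = Nmat 4 * Nmat 4 := rfl
@[simp] lemma W7 : Wmat 7 = Nmat 5 := rfl
@[simp] lemma W8 : Wmat 8 = Nmat 5 * Nmat 5 := rfl

lemma ρg (g : Fin 6) : ρ k (mkAlgHom k (QuiverRel k) (ι k g)) = mapc k (Nmat g) := by
  rw [ρ_mk]; simp [ρ₀, lift_ι_apply]

lemma ρ_basis (m : Fin 9) : ρ k (qbasisVec k m) = mapc k (Wmat m) := by
  have h0 : ρ k (qi k) = mapc k (Nmat 0) := ρg k 0
  have h1 : ρ k (qj k) = mapc k (Nmat 1) := ρg k 1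
  have h2 : ρ k (qα k) = mapc k (Nmat 2) := ρg k 2
  have h3 : ρ k (qβ k) = mapc k (Nmat 3) := ρg k 3
  have h5 : ρ k (qγ k) = mapc k (Nmat 4) := ρg k 4
  have h7 : ρ k (qδ k) = mapc k (Nmat 5) := ρg k 5
  have h4 : ρ k (qβ k * qα k) = mapc k (Nmat 3 * Nmat 2) := by
    rw [map_mul, h3, h2, ← map_mul]
  have h6 : ρ k (qγ k ^ 2) = mapc k (Nmat 4 * Nmat 4) := by
    rw [sq, map_mul, h5, ← map_mul]
  have h8 : ρ k (qδ k ^ 2) = mapc k (Nmat 5 * Nmat 5) := by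
    rw [sq, map_mul, h7, ← map_mul]
  fin_cases m
  · exact h0
  · exact h1
  · exact h2
  · exact h3
  · exact h4
  · exact h5
  · exact h6
  · exact h7
  · exact h8

def u0 : Fin 9 → ℕ := fun t => if t = 0 ∨ t = 1 then 1 else 0

/-- Evaluation vector. -/
noncomputable def v0 : Fin 9 → k := fun t => (u0 t : k)

lemma mapc_mulVec (M : Matrix (Fin 9) (Fin 9) ℕ) :
    (mapc k M).mulVec (v0 k) = fun t => ((M.mulVec u0 t : ℕ) : k) := by
  funext t
  simp only [mapc, RingHom.mapMatrix_apply, Matrix.mulVec, dotProduct,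
    Matrix.map_apply, v0, Nat.castRingHom, RingHom.coe_mk, MonoidHom.coe_mk,
    OneHom.coe_mk]
  push_cast
  rfl

/-- The coordinate map `A →ₗ k⁹`. -/
noncomputable def φ : QuiverAlg k →ₗ[k] (Fin 9 → k) :=
  { toFun := fun a => (ρ k a).mulVec (v0 k)
    map_add' := fun a b => by
      show (ρ k (a + b)).mulVec (v0 k) = _
      rw [map_add, Matrix.add_mulVec]
    map_smul' := fun c a => by
      show (ρ k (c • a)).mulVec (v0 k) = _
      rw [map_smul, Matrix.smul_mulVec]
      rfl }

lemma φ_basis (m : Fin 9) :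
    φ k (qbasisVec k m) = fun t => if t = m then (1 : k) else 0 := by
  have h : (Wmat m).mulVec u0 = fun t => if t = m then 1 else 0 := by
    fin_cases m <;> decide
  funext t
  show ((ρ k (qbasisVec k m)).mulVec (v0 k)) t = _
  rw [ρ_basis, mapc_mulVec, h]
  simp

lemma φ_one : φ k 1 = v0 k := by
  show (ρ k 1).mulVec (v0 k) = v0 k
  rw [map_one, Matrix.one_mulVec]

/-- The span of the nine basis elements. -/
noncomputable abbrev S : Submodule k (QuiverAlg k) :=
  Submodule.span k (Set.range (qbasisVec k))

lemma mem_S (m : Fin 9) : qbasisVec k m ∈ S k :=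
  Submodule.subset_span ⟨m, rfl⟩

lemma mem_S_i : qi k ∈ S k := mem_S k 0
lemma mem_S_j : qj k ∈ S k := mem_S k 1
lemma mem_S_a : qα k ∈ S k := mem_S k 2
lemma mem_S_b : qβ k ∈ S k := mem_S k 3
lemma mem_S_ba : qβ k * qα k ∈ S k := mem_S k 4
lemma mem_S_g : qγ k ∈ S k := mem_S k 5
lemma mem_S_g2 : qγ k ^ 2 ∈ S k := mem_S k 6
lemma mem_S_d : qδ k ∈ S k := mem_S k 7
lemma mem_S_d2 : qδ k ^ 2 ∈ S k := mem_S k 8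

lemma mul_closure (m m' : Fin 9) :
    qbasisVec k m * qbasisVec k m' ∈ S k := by
  fin_cases m <;> fin_cases m' <;>
    simp [mem_S_i, mem_S_j, mem_S_a, mem_S_b, mem_S_ba, mem_S_g, mem_S_g2,
      mem_S_d, mem_S_d2]

lemma S_top : S k = ⊤ := by
  rw [eq_top_iff]
  rintro x -
  obtain ⟨y, rfl⟩ := RingQuot.mkAlgHom_surjective k (QuiverRel k) x
  induction y using FreeAlgebra.induction with
  | grade0 r =>
      rw [AlgHom.commutes]
      have h1 : (1 : QuiverAlg k) ∈ S k := by
        rw [← q_one]; exact add_mem (mem_S_i k) (mem_S_j k)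
      simpa [Algebra.algebraMap_eq_smul_one] using
        Submodule.smul_mem (S k) r h1
  | grade1 t =>
      fin_cases t
      · exact mem_S_i k
      · exact mem_S_j k
      · exact mem_S_a k
      · exact mem_S_b k
      · exact mem_S_g k
      · exact mem_S_d k
  | mul x y hx hy =>
      rw [map_mul]
      have hle : S k * S k ≤ S k := by
        rw [Submodule.span_mul_span]
        refine Submodule.span_le.2 ?_
        rintro _ ⟨u, ⟨m, rfl⟩, v, ⟨m', rfl⟩, rfl⟩
        exact mul_closure k m m'
      exact hle (Submodule.mul_mem_mul hx hy)
  | add x y hx hy => rw [map_add]; exact add_mem hx hy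

/-- Every element is the canonical combination of the basis elements with
coefficients given by `φ`. -/
lemma repr_eq (a : QuiverAlg k) :
    a = ∑ m : Fin 9, φ k a m • qbasisVec k m := by
  have h : a ∈ S k := by rw [S_top]; trivial
  induction h using Submodule.span_induction with
  | mem x hx =>
      obtain ⟨m, rfl⟩ := hx
      rw [funext fun m' => congrFun (φ_basis k m) m']
      simp [Finset.sum_ite_eq', ite_smul]
  | zero => simp
  | add x y hx hy h1 h2 =>
      nth_rewrite 1 [h1, h2]
      rw [← Finset.sum_add_distrib]
      simp [map_add, add_smul]
  | smul c x hx h1 =>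
      nth_rewrite 1 [h1]
      rw [Finset.smul_sum]
      simp [map_smul, smul_smul]

lemma sum9 {M : Type*} [AddCommMonoid M] (f : Fin 9 → M) :
    ∑ m, f m = f 0 + f 1 + f 2 + f 3 + f 4 + f 5 + f 6 + f 7 + f 8 := by
  simp [Fin.sum_univ_succ, add_assoc]

lemma sum6 {M : Type*} [AddCommMonoid M] (f : Fin 6 → M) :
    ∑ m, f m = f 0 + f 1 + f 2 + f 3 + f 4 + f 5 := by
  simp [Fin.sum_univ_succ, add_assoc]

/-- If `z` commutes with the nine basis elements, it is central. -/
lemma central_of {z : QuiverAlg k}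
    (h : ∀ m, qbasisVec k m * z = z * qbasisVec k m) :
    z ∈ Subalgebra.center k (QuiverAlg k) := by
  rw [Subalgebra.mem_center_iff]
  intro b
  have hb : b ∈ S k := by rw [S_top]; trivial
  induction hb using Submodule.span_induction with
  | mem x hx => obtain ⟨m, rfl⟩ := hx; exact h m
  | zero => rw [zero_mul, mul_zero]
  | add x y hx hy h1 h2 => rw [add_mul, mul_add, h1, h2]
  | smul c x hx h1 => rw [smul_mul_assoc, mul_smul_comm, h1]

/-- The candidate basis of the center. -/
noncomputable def zvec : Fin 6 → QuiverAlg k :=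
  ![1, qγ k, qγ k ^ 2, qδ k, qδ k ^ 2, qβ k * qα k]

@[simp] lemma zv0 : zvec k 0 = 1 := rfl
@[simp] lemma zv1 : zvec k 1 = qγ k := rfl
@[simp] lemma zv2 : zvec k 2 = qγ k ^ 2 := rfl
@[simp] lemma zv3 : zvec k 3 = qδ k := rfl
@[simp] lemma zv4 : zvec k 4 = qδ k ^ 2 := rfl
@[simp] lemma zv5 : zvec k 5 = qβ k * qα k := rfl

lemma zvec_center (t : Fin 6) : zvec k t ∈ Subalgebra.center k (QuiverAlg k) := by
  fin_cases t
  · exact Subalgebra.one_mem _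
  all_goals refine central_of k fun m => ?_
  all_goals fin_cases m <;> simp

/- Coordinate lemmas. -/
lemma φ_a : φ k (qα k) = fun t => if t = 2 then (1 : k) else 0 := φ_basis k 2
lemma φ_b : φ k (qβ k) = fun t => if t = 3 then (1 : k) else 0 := φ_basis k 3
lemma φ_ba : φ k (qβ k * qα k) = fun t => if t = 4 then (1 : k) else 0 :=
  φ_basis k 4
lemma φ_g : φ k (qγ k) = fun t => if t = 5 then (1 : k) else 0 := φ_basis k 5
lemma φ_g2 : φ k (qγ k ^ 2) = fun t => if t = 6 then (1 : k) else 0 :=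
  φ_basis k 6
lemma φ_d : φ k (qδ k) = fun t => if t = 7 then (1 : k) else 0 := φ_basis k 7
lemma φ_d2 : φ k (qδ k ^ 2) = fun t => if t = 8 then (1 : k) else 0 :=
  φ_basis k 8

lemma zvec_li : LinearIndependent k (zvec k) := by
  rw [Fintype.linearIndependent_iff]
  intro c hc
  rw [sum6] at hc
  have h := fun t => congrFun (congrArg (φ k) hc) t
  simp only [map_add, map_smul, map_zero, Pi.add_apply, Pi.smul_apply,
    Pi.zero_apply, smul_eq_mul, zv0, zv1, zv2, zv3, zv4, zv5, φ_one, φ_g,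
    φ_g2, φ_d, φ_d2, φ_ba] at h
  have h0 := h 0
  have h4 := h 4
  have h5 := h 5
  have h6 := h 6
  have h7 := h 7
  have h8 := h 8
  simp [v0, u0] at h0 h4 h5 h6 h7 h8
  intro s
  fin_cases s <;> assumption

/-- The centre. -/
noncomputable abbrev Zc : Subalgebra k (QuiverAlg k) := Subalgebra.center k (QuiverAlg k)

/-- The candidate basis, as elements of the centre. -/
noncomputable def wvec : Fin 6 → Zc k := fun t => ⟨zvec k t, zvec_center k t⟩

lemma wvec_li : LinearIndependent k (wvec k) := by
  apply LinearIndependent.of_comp ((Zc k).val.toLinearMap)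
  exact zvec_li k

lemma center_spanned (x : Zc k) :
    x ∈ Submodule.span k (Set.range (wvec k)) := by
  obtain ⟨a, ha⟩ := x
  set c : Fin 9 → k := φ k a with hc
  have hrep := repr_eq k a
  -- constraints from commuting with α
  have hα := (Subalgebra.mem_center_iff.mp ha) (qα k)
  have hβ := (Subalgebra.mem_center_iff.mp ha) (qβ k)
  rw [hrep] at hα hβ
  rw [Finset.mul_sum, Finset.sum_mul] at hα
  rw [Finset.mul_sum, Finset.sum_mul] at hβ
  simp only [sum9, mul_smul_comm, smul_mul_assoc] at hα hβ
  simp at hα hβ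
  -- hα : c 1 • qα + c 3 • qδ^2 = c 0 • qα + c 3 • (qβ * qα)
  -- hβ : c 0 • qβ + c 2 • (qβ * qα) = c 1 • qβ + c 2 • qδ^2
  have p2 := congrFun (congrArg (φ k) hα) 2
  have p4 := congrFun (congrArg (φ k) hα) 4
  have p4' := congrFun (congrArg (φ k) hβ) 4
  simp only [map_add, map_smul, φ_a, φ_b, φ_ba, φ_d2, Pi.add_apply,
    Pi.smul_apply, smul_eq_mul] at p2 p4 p4'
  simp at p2 p4 p4'
  have hc10 : c 1 = c 0 := p2
  have hc3 : c 3 = 0 := by first | exact p4 | exact p4.symm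
  have hc2 : c 2 = 0 := p4'
  clear_value c
  have key : (⟨a, ha⟩ : Zc k) =
      c 0 • wvec k 0 + c 5 • wvec k 1 + c 6 • wvec k 2 + c 7 • wvec k 3 +
        c 8 • wvec k 4 + c 4 • wvec k 5 := by
    apply Subtype.ext
    show a = _
    push_cast [wvec]
    rw [show zvec k 0 = 1 from rfl, show zvec k 1 = qγ k from rfl,
      show zvec k 2 = qγ k ^ 2 from rfl, show zvec k 3 = qδ k from rfl,
      show zvec k 4 = qδ k ^ 2 from rfl,
      show zvec k 5 = qβ k * qα k from rfl]
    rw [hrep, sum9]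
    simp only [qb0, qb1, qb2, qb3, qb4, qb5, qb6, qb7, qb8]
    rw [← hc]
    rw [hc2, hc3, hc10, ← q_one]
    simp [smul_add]
    abel
  rw [key]
  have hm : ∀ t : Fin 6, wvec k t ∈ Submodule.span k (Set.range (wvec k)) :=
    fun t => Submodule.subset_span ⟨t, rfl⟩
  exact add_mem (add_mem (add_mem (add_mem (add_mem
    (Submodule.smul_mem _ _ (hm 0)) (Submodule.smul_mem _ _ (hm 1)))
    (Submodule.smul_mem _ _ (hm 2))) (Submodule.smul_mem _ _ (hm 3)))
    (Submodule.smul_mem _ _ (hm 4))) (Submodule.smul_mem _ _ (hm 5))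

end Aux

/-- The centre `Z(A)` of the quiver algebra `A` has `k`-basis `{1, γ, γ², δ, δ², βα}`;
in particular `dim_k Z(A) = 6`. -/
theorem stmt_6 :
    (∃ b : Module.Basis (Fin 6) k ↥(Subalgebra.center k (QuiverAlg k)),
      ∀ m, (b m : QuiverAlg k) =
        ![1, qγ k, qγ k ^ 2, qδ k, qδ k ^ 2, qβ k * qα k] m) ∧
    Module.finrank k ↥(Subalgebra.center k (QuiverAlg k)) = 6 := by
  have hsp : ⊤ ≤ Submodule.span k (Set.range (wvec k)) := fun x _ =>
    center_spanned k x
  let b : Module.Basis (Fin 6) k ↥(Subalgebra.center k (QuiverAlg k)) :=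
    Module.Basis.mk (wvec_li k) hsp
  constructor
  · refine ⟨b, fun m => ?_⟩
    have : b m = wvec k m := by simp [b]
    rw [this]
    show zvec k m = _
    rfl
  · rw [Module.finrank_eq_card_basis b, Fintype.card_fin]
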